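/- arXiv:1009.2602 — 6 statements merged into one kernel-verified Lean document; each statement's English description precedes it below -/
import Mathlib

section
/- Under the homogeneous rate assumption, the joint channel probing and scheduling problem is a monotone stopping problem: for every integer j with 0 ≤ j, j+2 ≤ K and (j+2)β ≤ 1, the event ℰ_j = {ω : (1−jβ)·w_j(ω) ≥ (1−(j+1)β)·φ_{j+1}(w_j(ω))} is contained in the event ℰ_{j+1} = {ω : (1−(j+1)β)·w_{j+1}(ω) ≥ (1−(j+2)β)·φ_{j+2}(w_{j+1}(ω))}. -/
open MeasureTheory ProbabilityTheory

/-- The joint channel probing and scheduling problem is a monotone stopping problem: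
the one-stage look-ahead stopping event after `j` probes is contained in the one after
`j+1` probes. -/
theorem monotone_stopping_problem
    {Ω : Type*} [MeasureSpace Ω] [IsProbabilityMeasure (ℙ : Measure Ω)]
    (K : ℕ) (X : Fin K → Ω → ℝ)
    (hXmeas : ∀ k, Measurable (X k))
    (hXnonneg : ∀ k ω, 0 ≤ X k ω)
    (hXint : ∀ k, Integrable (X k) ℙ)
    (hXmean : ∀ k, ∫ ω, X k ω ∂ℙ = 1)
    (hXindep : iIndepFun X ℙ)
    (hXident : ∀ k l, IdentDistrib (X k) (X l) ℙ ℙ)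
    (c : Fin K → ℝ) (hc_nonneg : ∀ k, 0 ≤ c k)
    (hc_mono : ∀ k l : Fin K, k ≤ l → c l ≤ c k)
    (β : ℝ) (hβ0 : 0 < β) (hβ1 : β < 1)
    (s : Fin K → Ω → ℝ) (hs : ∀ k ω, s k ω = c k * X k ω)
    (w : ℕ → Ω → ℝ)
    (hw0 : ∀ ω, w 0 ω = 0)
    (hw : ∀ j : ℕ, ∀ hj : j + 1 ≤ K, ∀ ω,
      w (j + 1) ω = max (w j ω) (s ⟨j, by omega⟩ ω))
    (φ : Fin K → ℝ → ℝ)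
    (hφ : ∀ k x, φ k x = ∫ ω, max x (s k ω) ∂ℙ)
    (j : ℕ) (hj : j + 2 ≤ K) (hjβ : ((j : ℝ) + 2) * β ≤ 1) :
    {ω | (1 - (j : ℝ) * β) * w j ω ≥
        (1 - ((j : ℝ) + 1) * β) * φ ⟨j, by omega⟩ (w j ω)} ⊆
    {ω | (1 - ((j : ℝ) + 1) * β) * w (j + 1) ω ≥
        (1 - ((j : ℝ) + 2) * β) * φ ⟨j + 1, by omega⟩ (w (j + 1) ω)} := by
  -- basic integrability facts
  have hsint : ∀ k : Fin K, Integrable (s k) ℙ := by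
    intro k
    have h : s k = fun ω => c k * X k ω := funext (hs k)
    rw [h]
    exact (hXint k).const_mul _
  have hmax_int : ∀ (g : Ω → ℝ), Integrable g ℙ → ∀ x : ℝ,
      Integrable (fun ω => max x (g ω)) ℙ := by
    intro g hg x
    have : (fun ω => max x (g ω)) = fun ω => (fun _ => x) ω ⊔ g ω := by
      funext ω; simp [max_def]
    rw [this]
    exact (integrable_const x).sup hg
  -- φ dominates identity
  have hφ_ge : ∀ (k : Fin K) (x : ℝ), x ≤ φ k x := by
    intro k x
    rw [hφ]
    calc x = ∫ _ω, x ∂ℙ := by simp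
      _ ≤ ∫ ω, max x (s k ω) ∂ℙ :=
        integral_mono (integrable_const x) (hmax_int _ (hsint k) x)
          (fun ω => le_max_left _ _)
  -- φ is 1-Lipschitz from above
  have hφ_lip : ∀ (k : Fin K) (x y : ℝ), x ≤ y → φ k y ≤ φ k x + (y - x) := by
    intro k x y hxy
    rw [hφ, hφ]
    have hadd : ∫ ω, max x (s k ω) ∂ℙ + (y - x)
        = ∫ ω, (max x (s k ω) + (y - x)) ∂ℙ := by
      rw [integral_add (hmax_int _ (hsint k) x) (integrable_const _)]
      simp
    rw [hadd]
    refine integral_mono (hmax_int _ (hsint k) y)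
      ((hmax_int _ (hsint k) x).add (integrable_const _)) (fun ω => ?_)
    rcases le_total y (s k ω) with h | h
    · rw [max_eq_right h]
      have := le_max_right x (s k ω)
      linarith
    · rw [max_eq_left h]
      have := le_max_left x (s k ω)
      linarith
  -- φ at the next index is smaller
  set k1 : Fin K := ⟨j, by omega⟩ with hk1
  set k2 : Fin K := ⟨j + 1, by omega⟩ with hk2
  have hc12 : c k2 ≤ c k1 := hc_mono k1 k2 (by simp [hk1, hk2, Fin.le_def])
  have hφ_mono : ∀ x : ℝ, φ k2 x ≤ φ k1 x := by
    intro x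
    have hmeas : Measurable fun t : ℝ => max x (c k1 * t) :=
      measurable_const.max (measurable_id.const_mul _)
    have hident := ((hXident k2 k1).comp hmeas).integral_eq
    have h1 : φ k2 x = ∫ ω, max x (s k2 ω) ∂ℙ := hφ _ _
    have h2 : (∫ ω, max x (s k2 ω) ∂ℙ) ≤ ∫ ω, max x (c k1 * X k2 ω) ∂ℙ := by
      refine integral_mono (hmax_int _ (hsint k2) x)
        (hmax_int _ ((hXint k2).const_mul _) x) (fun ω => ?_)
      have : s k2 ω ≤ c k1 * X k2 ω := by
        rw [hs]
        exact mul_le_mul_of_nonneg_right hc12 (hXnonneg k2 ω)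
      exact max_le_max le_rfl this
    have h3 : (∫ ω, max x (c k1 * X k2 ω) ∂ℙ) = ∫ ω, max x (c k1 * X k1 ω) ∂ℙ :=
      hident
    have h4 : (∫ ω, max x (c k1 * X k1 ω) ∂ℙ) = φ k1 x := by
      rw [hφ]
      congr 1
      funext ω
      rw [hs]
    linarith
  -- nonnegativity of w
  have hwpos : ∀ i : ℕ, i ≤ K → ∀ ω, 0 ≤ w i ω := by
    intro i
    induction i with
    | zero => intro _ ω; rw [hw0]
    | succ n ih =>
      intro hn ω
      rw [hw n hn ω]
      exact le_trans (ih (by omega) ω) (le_max_left _ _)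
  -- main pointwise argument
  intro ω hω
  simp only [Set.mem_setOf_eq, ge_iff_le] at hω ⊢
  set a : ℝ := 1 - (j : ℝ) * β with ha
  set b : ℝ := 1 - ((j : ℝ) + 1) * β with hb
  set d : ℝ := 1 - ((j : ℝ) + 2) * β with hd
  have hd0 : 0 ≤ d := by simp only [hd]; linarith
  have hb0 : 0 < b := by simp only [hb, hd] at hd0 ⊢; linarith
  have hbd : d ≤ b := by simp only [hb, hd]; linarith
  have hab : a * d = b * b - β * β := by simp only [ha, hb, hd]; ring
  set w0 : ℝ := w j ω with hw0'
  set w1 : ℝ := w (j + 1) ω with hw1'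
  have hw01 : w0 ≤ w1 := by
    rw [hw1', hw j (by omega) ω]
    exact le_max_left _ _
  have hw0nn : 0 ≤ w0 := hwpos j (by omega) ω
  have hlip := hφ_lip k2 w0 w1 hw01
  have hmono := hφ_mono w0
  have hge := hφ_ge k1 w0
  -- hω : b * φ k1 w0 ≤ a * w0 ; goal : d * φ k2 w1 ≤ b * w1
  nlinarith [mul_le_mul_of_nonneg_left hω hd0,
    mul_le_mul_of_nonneg_left hlip hd0,
    mul_le_mul_of_nonneg_left hmono hd0,
    mul_nonneg hw0nn (mul_nonneg hβ0.le hβ0.le),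
    mul_le_mul_of_nonneg_right hbd (sub_nonneg.mpr hw01),
    mul_pos hb0 hb0, sq_nonneg (b - d)]
end

section
/- The one-stage look-ahead function f_j is nondecreasing on [0,∞): for all reals w' ≥ w ≥ 0, f_j(w') ≥ f_j(w). -/
open MeasureTheory

/-- The one-stage look-ahead function `f_j` is nondecreasing on `[0, ∞)`. -/
theorem one_stage_lookahead_monotone
    {Ω : Type*} [MeasurableSpace Ω] (P : Measure Ω) [IsProbabilityMeasure P]
    (S : Ω → ℝ) (hSmeas : Measurable S) (hSnonneg : ∀ ω, 0 ≤ S ω)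
    (hSint : Integrable S P)
    (β : ℝ) (hβ0 : 0 < β) (hβ1 : β < 1)
    (j : ℕ) (hjβ : ((j : ℝ) + 1) * β ≤ 1)
    (f : ℝ → ℝ)
    (hf : ∀ x, f x = (1 - (j : ℝ) * β) * x -
      (1 - ((j : ℝ) + 1) * β) * ∫ ω, max x (S ω) ∂P)
    (w w' : ℝ) (hw : 0 ≤ w) (hww' : w ≤ w') :
    f w ≤ f w' := by
  have hint : ∀ x : ℝ, Integrable (fun ω => max x (S ω)) P := fun x =>
    (integrable_const x).sup hSint
  have hkey : (∫ ω, max w' (S ω) ∂P) ≤ (∫ ω, max w (S ω) ∂P) + (w' - w) := by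
    have : (∫ ω, max w' (S ω) ∂P) ≤ ∫ ω, (max w (S ω) + (w' - w)) ∂P := by
      refine integral_mono (hint w') ((hint w).add (integrable_const _)) ?_
      intro ω
      rcases le_total w' (S ω) with h | h
      · simp only
        rw [max_eq_right h, max_eq_right (hww'.trans h)]
        linarith
      · simp only
        rw [max_eq_left h]
        have := le_max_left w (S ω)
        linarith
    rwa [integral_add (hint w) (integrable_const _), integral_const,
      probReal_univ, smul_eq_mul, one_mul] at this
  have hc1 : 0 ≤ 1 - ((j : ℝ) + 1) * β := by linarith
  have hc2 : 1 - ((j : ℝ) + 1) * β ≤ 1 - (j : ℝ) * β := by nlinarith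
  rw [hf w, hf w']
  nlinarith [mul_le_mul_of_nonneg_left hkey hc1]
end

section
/- If in addition (j+1)β < 1 and E[S] > 0, then f_j(0) < 0, f_j(w) ≥ β·w − (1−(j+1)β)·E[S] for every w ≥ 0 (so f_j(w) → ∞ as w → ∞), and there exists a threshold w_th > 0 such that for every w ≥ 0, f_j(w) ≥ 0 if and only if w ≥ w_th; that is, the stopping region {w ≥ 0 : f_j(w) ≥ 0} equals the interval [w_th, ∞). -/
open MeasureTheory

/-- If `(j+1)β < 1` and `E[S] > 0`, then `f_j(0) < 0`,
`f_j(w) ≥ β w - (1-(j+1)β) E[S]` for every `w ≥ 0`, and there is a threshold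
`w_th > 0` such that the stopping region `{w ≥ 0 : f_j(w) ≥ 0}` is exactly `[w_th, ∞)`. -/
theorem one_stage_lookahead_threshold
    {Ω : Type*} [MeasurableSpace Ω] (P : Measure Ω) [IsProbabilityMeasure P]
    (S : Ω → ℝ) (hSmeas : Measurable S) (hSnonneg : ∀ ω, 0 ≤ S ω)
    (hSint : Integrable S P)
    (β : ℝ) (hβ0 : 0 < β) (hβ1 : β < 1)
    (j : ℕ) (hjβ : ((j : ℝ) + 1) * β < 1)
    (hSmean : 0 < ∫ ω, S ω ∂P)
    (f : ℝ → ℝ)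
    (hf : ∀ x, f x = (1 - (j : ℝ) * β) * x -
      (1 - ((j : ℝ) + 1) * β) * ∫ ω, max x (S ω) ∂P) :
    f 0 < 0 ∧
    (∀ w : ℝ, 0 ≤ w →
      β * w - (1 - ((j : ℝ) + 1) * β) * ∫ ω, S ω ∂P ≤ f w) ∧
    ∃ wth : ℝ, 0 < wth ∧ ∀ w : ℝ, 0 ≤ w → (0 ≤ f w ↔ wth ≤ w) := by
  set c1 : ℝ := 1 - (j : ℝ) * β with hc1
  set c2 : ℝ := 1 - ((j : ℝ) + 1) * β with hc2
  have hc2pos : 0 < c2 := by simp [hc2]; linarith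
  have hc1c2 : c1 - c2 = β := by simp [hc1, hc2]; ring
  have hc1pos : 0 < c1 := by linarith
  have hInt : ∀ w : ℝ, Integrable (fun ω => max w (S ω)) P :=
    fun w => (integrable_const w).sup hSint
  set I : ℝ → ℝ := fun w => ∫ ω, max w (S ω) ∂P with hI
  have hI0 : I 0 = ∫ ω, S ω ∂P := by
    refine integral_congr_ae (Filter.Eventually.of_forall fun ω => ?_)
    exact max_eq_right (hSnonneg ω)
  -- Lipschitz-type bounds
  have hImono : ∀ w w' : ℝ, w ≤ w' → I w ≤ I w' := by
    intro w w' h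
    exact integral_mono (hInt w) (hInt w') fun ω => max_le_max h le_rfl
  have hIrev : ∀ w w' : ℝ, w ≤ w' → I w' ≤ I w + (w' - w) := by
    intro w w' h
    have : I w + (w' - w) = ∫ ω, (max w (S ω) + (w' - w)) ∂P := by
      rw [integral_add (hInt w) (integrable_const _), integral_const]
      simp [hI]
    rw [this]
    refine integral_mono (hInt w') ((hInt w).add (integrable_const _)) fun ω => ?_
    refine max_le (by linarith [le_max_left w (S ω)]) ?_
    have := le_max_right w (S ω); linarith
  have hfeq : ∀ w, f w = c1 * w - c2 * I w := hf
  have hf0 : f 0 < 0 := by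
    rw [hfeq, hI0]
    have := mul_pos hc2pos hSmean
    linarith
  refine ⟨hf0, ?_, ?_⟩
  · intro w hw
    rw [hfeq]
    have h1 : I w ≤ ∫ ω, S ω ∂P + w := by
      have := hIrev 0 w hw
      rw [hI0] at this; linarith
    nlinarith [mul_le_mul_of_nonneg_left h1 hc2pos.le]
  · -- threshold
    -- strict increase: f w' - f w ≥ β (w' - w) for w ≤ w'
    have hgap : ∀ w w' : ℝ, w ≤ w' → f w + β * (w' - w) ≤ f w' := by
      intro w w' h
      rw [hfeq, hfeq]
      have h1 : I w' ≤ I w + (w' - w) := hIrev w w' h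
      nlinarith [mul_le_mul_of_nonneg_left h1 hc2pos.le]
    -- continuity of I
    have hIlip : LipschitzWith 1 I := by
      refine LipschitzWith.of_dist_le_mul fun a b => ?_
      rw [Real.dist_eq, Real.dist_eq, NNReal.coe_one, one_mul]
      have h1 : I a - I b = ∫ ω, (max a (S ω) - max b (S ω)) ∂P := by
        rw [integral_sub (hInt a) (hInt b)]
      rw [h1]
      calc |∫ ω, (max a (S ω) - max b (S ω)) ∂P|
          ≤ ∫ ω, |max a (S ω) - max b (S ω)| ∂P :=
            by simpa [Real.norm_eq_abs] using
              norm_integral_le_integral_norm (fun ω => max a (S ω) - max b (S ω)) (μ := P)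
        _ ≤ ∫ _ω, |a - b| ∂P := by
            refine integral_mono ((hInt a).sub (hInt b)).abs (integrable_const _)
              fun ω => abs_max_sub_max_le_abs a b (S ω)
        _ = |a - b| := by simp
    have hfc : Continuous f := by
      have : f = fun w => c1 * w - c2 * I w := funext hfeq
      rw [this]
      exact (continuous_const.mul continuous_id).sub
        (continuous_const.mul hIlip.continuous)
    -- a point where f is positive
    set c : ℝ := c2 * ∫ ω, S ω ∂P with hc
    have hcpos : 0 < c := mul_pos hc2pos hSmean
    set W : ℝ := (c + 1) / β with hW
    have hWpos : 0 < W := div_pos (by linarith) hβ0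
    have hfW : 0 < f W := by
      have hbd : β * W - c ≤ f W := by
        rw [hfeq]
        have h1 : I W ≤ ∫ ω, S ω ∂P + W := by
          have := hIrev 0 W hWpos.le
          rw [hI0] at this; linarith
        nlinarith [mul_le_mul_of_nonneg_left h1 hc2pos.le]
      have : β * W = c + 1 := by
        rw [hW, mul_div_cancel₀]; exact hβ0.ne'
      linarith
    have hsub := intermediate_value_Icc hWpos.le hfc.continuousOn
    have h0mem : (0 : ℝ) ∈ Set.Icc (f 0) (f W) := ⟨hf0.le, hfW.le⟩
    obtain ⟨wth, hwth_mem, hwth_eq⟩ := hsub h0mem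
    have hwth_pos : 0 < wth := by
      rcases lt_or_eq_of_le hwth_mem.1 with h | h
      · exact h
      · exfalso; rw [← h] at hwth_eq; linarith
    refine ⟨wth, hwth_pos, fun w hw => ⟨fun hfw => ?_, fun hle => ?_⟩⟩
    · by_contra hlt
      push_neg at hlt
      have := hgap w wth hlt.le
      have hβpos : 0 < β * (wth - w) := mul_pos hβ0 (by linarith)
      linarith [hwth_eq]
    · have := hgap wth w hle
      have : f wth ≤ f w := by nlinarith
      linarith [hwth_eq]
end

section
/- The one-stage look-ahead rule is an optimal stopping rule: for every stopping time τ with respect to the natural filtration (σ(s_1,…,s_j))_{1≤j≤K} satisfying 1 ≤ τ ≤ J_max almost surely, the stopping step J* satisfies E[(1−J*β)·w_{J*}] ≥ E[(1−τβ)·w_τ]; that is, J* maximizes the expected reward E[y_J] over all stopping times bounded by J_max. -/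
open MeasureTheory ProbabilityTheory

lemma int_max_const {Ω : Type*} [MeasurableSpace Ω] {P : Measure Ω} [IsFiniteMeasure P]
    {Y : Ω → ℝ} (hYi : Integrable Y P) (x : ℝ) :
    Integrable (fun ω => max x (Y ω)) P := by
  have h := (integrable_const (μ := P) x).sup hYi
  have he : (fun ω => max x (Y ω)) = (fun _ => x) ⊔ Y := by
    funext ω; simp [Pi.sup_def]
  rw [he]; exact h

lemma lips_int_max {Ω : Type*} [MeasurableSpace Ω] {P : Measure Ω} [IsProbabilityMeasure P]
    {Y : Ω → ℝ} (hYi : Integrable Y P) :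
    LipschitzWith 1 (fun x => ∫ ω, max x (Y ω) ∂P) := by
  apply LipschitzWith.of_dist_le_mul
  intro a b
  rw [Real.dist_eq, Real.dist_eq, NNReal.coe_one, one_mul]
  have h1 : ∀ x : ℝ, Integrable (fun ω => max x (Y ω)) P := fun x => int_max_const hYi x
  rw [← integral_sub (h1 a) (h1 b)]
  calc |∫ ω, (max a (Y ω) - max b (Y ω)) ∂P| ≤ ∫ ω, |max a (Y ω) - max b (Y ω)| ∂P := by
        simpa using norm_integral_le_integral_norm (fun ω => max a (Y ω) - max b (Y ω)) (μ := P)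
    _ ≤ ∫ _ω, |a - b| ∂P := by
        apply integral_mono ((h1 a).sub (h1 b)).abs (integrable_const _)
        intro ω
        exact abs_max_sub_max_le_abs _ _ _
    _ = |a - b| := by simp

/-- Key independence computation: if the pair `(W, χ)` is independent of `Y`, then
`E[max(W,Y)·χ] = E[L(W)·χ]` where `L x = E[max(x,Y)]`. -/
lemma indep_max_integral {Ω : Type*} [MeasurableSpace Ω] {P : Measure Ω} [IsProbabilityMeasure P]
    {W χ Y : Ω → ℝ} (hW : Measurable W) (hχ : Measurable χ) (hY : Measurable Y)
    (hχb : ∀ ω, |χ ω| ≤ 1)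
    (hindep : IndepFun (fun ω => (W ω, χ ω)) Y P)
    (hWi : Integrable W P) (hYi : Integrable Y P) :
    ∫ ω, max (W ω) (Y ω) * χ ω ∂P = ∫ ω, (∫ ω', max (W ω) (Y ω') ∂P) * χ ω ∂P := by
  set ν : Measure ℝ := P.map Y with hν
  set μ : Measure (ℝ × ℝ) := P.map (fun ω => (W ω, χ ω)) with hμ
  have hpair : Measurable (fun ω => (W ω, χ ω)) := hW.prodMk hχ
  have htrio : Measurable (fun ω => ((W ω, χ ω), Y ω)) := hpair.prodMk hY
  have hmap : P.map (fun ω => ((W ω, χ ω), Y ω)) = μ.prod ν :=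
    (indepFun_iff_map_prod_eq_prod_map_map hpair.aemeasurable hY.aemeasurable).mp hindep
  have hνprob : IsProbabilityMeasure ν := Measure.isProbabilityMeasure_map hY.aemeasurable
  have hμprob : IsProbabilityMeasure μ := Measure.isProbabilityMeasure_map hpair.aemeasurable
  set f : (ℝ × ℝ) × ℝ → ℝ := fun p => max p.1.1 p.2 * p.1.2 with hf
  have hfc : Continuous f := (continuous_fst.fst.max continuous_snd).mul continuous_fst.snd
  -- integrability of the composite
  have hcomp_int : Integrable (fun ω => max (W ω) (Y ω) * χ ω) P := by
    apply Integrable.mono' (hWi.abs.add hYi.abs)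
      ((hW.max hY).mul hχ).aestronglyMeasurable
    filter_upwards with ω
    have h1 : |max (W ω) (Y ω) * χ ω| ≤ |max (W ω) (Y ω)| := by
      rw [abs_mul]
      calc |max (W ω) (Y ω)| * |χ ω| ≤ |max (W ω) (Y ω)| * 1 :=
            mul_le_mul_of_nonneg_left (hχb ω) (abs_nonneg _)
        _ = |max (W ω) (Y ω)| := mul_one _
    have h2 : |max (W ω) (Y ω)| ≤ |W ω| + |Y ω| := by
      rcases max_choice (W ω) (Y ω) with h | h <;> rw [h]
      · exact le_add_of_le_of_nonneg le_rfl (abs_nonneg _)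
      · exact le_add_of_nonneg_of_le (abs_nonneg _) le_rfl
    rw [Real.norm_eq_abs]; exact h1.trans h2
  have hf_int : Integrable f (μ.prod ν) := by
    rw [← hmap]
    rw [integrable_map_measure hfc.aestronglyMeasurable htrio.aemeasurable]
    exact hcomp_int
  -- Lipschitz continuity of L
  have hL : LipschitzWith 1 (fun x => ∫ ω, max x (Y ω) ∂P) := lips_int_max hYi
  set g : ℝ × ℝ → ℝ := fun p => (∫ ω', max p.1 (Y ω') ∂P) * p.2 with hg
  have hgc : Continuous g := (hL.continuous.comp continuous_fst).mul continuous_snd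
  calc ∫ ω, max (W ω) (Y ω) * χ ω ∂P
      = ∫ z, f z ∂(P.map (fun ω => ((W ω, χ ω), Y ω))) := by
        rw [integral_map htrio.aemeasurable hfc.aestronglyMeasurable]
    _ = ∫ z, f z ∂(μ.prod ν) := by rw [hmap]
    _ = ∫ p, ∫ y, f (p, y) ∂ν ∂μ := integral_prod f hf_int
    _ = ∫ p, g p ∂μ := by
        apply integral_congr_ae
        filter_upwards with p
        have : ∫ y, f (p, y) ∂ν = ∫ y, max p.1 y * p.2 ∂ν := rfl
        rw [this, integral_mul_const]
        congr 1
        rw [hν, integral_map hY.aemeasurable]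
        exact (continuous_const.max continuous_id).aestronglyMeasurable
    _ = ∫ ω, g (W ω, χ ω) ∂P := by
        rw [hμ, integral_map hpair.aemeasurable hgc.aestronglyMeasurable]
    _ = ∫ ω, (∫ ω', max (W ω) (Y ω') ∂P) * χ ω ∂P := rfl


lemma indep_F_s {Ω : Type*} [MeasurableSpace Ω] {P : Measure Ω} [IsProbabilityMeasure P]
    (K : ℕ) (X : ℕ → Ω → ℝ) (hXmeas : ∀ k, Measurable (X k))
    (hXindep : iIndepFun (fun k : Fin K => X (k + 1)) P)
    (c : ℕ → ℝ) (s : ℕ → Ω → ℝ) (hs : ∀ k ω, s k ω = c k * X k ω)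
    (F : ℕ → MeasurableSpace Ω)
    (hF : ∀ j, F j = ⨆ k ∈ Finset.Icc 1 j, MeasurableSpace.comap (s k) inferInstance)
    (j : ℕ) (hj : j + 1 ≤ K) :
    Indep (F j) (MeasurableSpace.comap (s (j + 1)) inferInstance) P := by
  set m : Fin K → MeasurableSpace Ω :=
    fun i => MeasurableSpace.comap (X ((i : ℕ) + 1)) inferInstance with hm
  have h_le : ∀ i, m i ≤ ‹MeasurableSpace Ω› := fun i => (hXmeas _).comap_le
  have hiI : iIndep m P := (iIndepFun_iff_iIndep _ _ _).mp hXindep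
  have hcs : ∀ k, MeasurableSpace.comap (s k) inferInstance ≤
      MeasurableSpace.comap (X k) inferInstance := by
    intro k
    rintro _ ⟨u, hu, rfl⟩
    refine ⟨(fun x => c k * x) ⁻¹' u, (measurable_const_mul (c k)) hu, ?_⟩
    ext ω; simp [hs, Set.mem_preimage]
  have hmain := indep_biSup_compl h_le hiI {i : Fin K | (i : ℕ) < j}
  refine indep_of_indep_of_le_left (indep_of_indep_of_le_right hmain ?_) ?_
  · -- comap (s (j+1)) ≤ ⨆ i ∈ tᶜ, m i
    refine le_trans (hcs (j + 1)) ?_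
    have hjK : j < K := by omega
    have hmem : (⟨j, hjK⟩ : Fin K) ∈ {i : Fin K | (i : ℕ) < j}ᶜ := by simp
    exact le_trans (le_of_eq rfl) (le_biSup m hmem)
  · -- F j ≤ ⨆ i ∈ t, m i
    rw [hF]
    refine iSup₂_le fun k hk => ?_
    simp only [Finset.mem_Icc] at hk
    have hk1 : k - 1 < K := by omega
    have hmem : (⟨k - 1, hk1⟩ : Fin K) ∈ {i : Fin K | (i : ℕ) < j} := by
      simp only [Set.mem_setOf_eq]; omega
    refine le_trans (hcs k) (le_trans ?_ (le_biSup m hmem))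
    have hk2 : k - 1 + 1 = k := by omega
    simp only [hm, hk2]
    exact le_rfl
/-- The one-stage look-ahead rule is an optimal stopping rule: for every stopping time `τ`
with respect to the natural filtration `σ(s_1,…,s_j)` satisfying `1 ≤ τ ≤ J_max`, the
one-stage look-ahead stopping step `J*` satisfies
`E[(1 − J*β)·w_{J*}] ≥ E[(1 − τβ)·w_τ]`. -/
theorem one_stage_lookahead_optimal
    {Ω : Type*} [MeasurableSpace Ω] (P : Measure Ω) [IsProbabilityMeasure P]
    (K : ℕ) (hK : 1 ≤ K)
    (X : ℕ → Ω → ℝ)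
    (hXmeas : ∀ k, Measurable (X k))
    (hXnonneg : ∀ k ω, 0 ≤ X k ω)
    (hXint : ∀ k, Integrable (X k) P)
    (hXmean : ∀ k, ∫ ω, X k ω ∂P = 1)
    (hXindep : iIndepFun (fun k : Fin K => X (k + 1)) P)
    (hXident : ∀ k l, IdentDistrib (X k) (X l) P P)
    (c : ℕ → ℝ) (hc_nonneg : ∀ k, 0 ≤ c k)
    (hc_mono : ∀ k l : ℕ, k ≤ l → c l ≤ c k)
    (β : ℝ) (hβ0 : 0 < β) (hβ1 : β < 1)
    (Jmax : ℕ) (hJmax : Jmax = min K ⌊1 / β⌋₊)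
    (s : ℕ → Ω → ℝ) (hs : ∀ k ω, s k ω = c k * X k ω)
    (w : ℕ → Ω → ℝ)
    (hw0 : ∀ ω, w 0 ω = 0)
    (hw : ∀ j ω, w (j + 1) ω = max (w j ω) (s (j + 1) ω))
    (φ : ℕ → ℝ → ℝ)
    (hφ : ∀ k x, φ k x = ∫ ω, max x (s k ω) ∂P)
    (F : ℕ → MeasurableSpace Ω)
    (hF : ∀ j, F j = ⨆ k ∈ Finset.Icc 1 j, MeasurableSpace.comap (s k) inferInstance)
    (Jstar : Ω → ℕ)
    (hJstar : ∀ ω, Jstar ω =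
      sInf ({j : ℕ | 1 ≤ j ∧ j ≤ Jmax - 1 ∧
        (1 - (j : ℝ) * β) * w j ω ≥ (1 - ((j : ℝ) + 1) * β) * φ (j + 1) (w j ω)}
        ∪ {Jmax}))
    (τ : Ω → ℕ)
    (hτ_stopping : ∀ j : ℕ, MeasurableSet[F j] {ω | τ ω = j})
    (hτ_range : ∀ᵐ ω ∂P, 1 ≤ τ ω ∧ τ ω ≤ Jmax) :
    ∫ ω, (1 - (τ ω : ℝ) * β) * w (τ ω) ω ∂P ≤
      ∫ ω, (1 - (Jstar ω : ℝ) * β) * w (Jstar ω) ω ∂P := by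
  -- basic facts
  classical
  have hsm : ∀ k, Measurable (s k) := by
    intro k
    have : s k = fun ω => c k * X k ω := funext (hs k)
    rw [this]; exact (hXmeas k).const_mul (c k)
  have hsi : ∀ k, Integrable (s k) P := by
    intro k
    have : s k = fun ω => c k * X k ω := funext (hs k)
    rw [this]; exact (hXint k).const_mul (c k)
  have hFle : ∀ j, F j ≤ ‹MeasurableSpace Ω› := by
    intro j; rw [hF]
    exact iSup₂_le fun k _ => (hsm k).comap_le
  have hcomap_le_F : ∀ k j : ℕ, k ∈ Finset.Icc 1 j →
      MeasurableSpace.comap (s k) inferInstance ≤ F j := by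
    intro k j hk
    rw [hF j]
    exact le_iSup₂ (f := fun k (_ : k ∈ Finset.Icc 1 j) =>
      MeasurableSpace.comap (s k) inferInstance) k hk
  have hFmono : ∀ i j : ℕ, i ≤ j → F i ≤ F j := by
    intro i j hij; rw [hF i]
    refine iSup₂_le fun k hk => ?_
    simp only [Finset.mem_Icc] at hk
    exact hcomap_le_F k j (Finset.mem_Icc.mpr ⟨hk.1, hk.2.trans hij⟩)
  have hwFm : ∀ j, Measurable[F j] (w j) := by
    intro j
    induction j with
    | zero =>
      have : w 0 = fun _ => (0:ℝ) := funext hw0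
      rw [this]; exact measurable_const
    | succ n ih =>
      have : w (n+1) = fun ω => max (w n ω) (s (n+1) ω) := funext (hw n)
      rw [this]
      have h1 : Measurable[F (n+1)] (w n) := ih.mono (hFmono n (n+1) (Nat.le_succ n)) le_rfl
      have h2 : Measurable[F (n+1)] (s (n+1)) := by
        exact Measurable.of_comap_le
          (hcomap_le_F (n+1) (n+1) (Finset.mem_Icc.mpr ⟨Nat.le_add_left 1 n, le_rfl⟩))
      exact h1.max h2
  have hwm : ∀ j, Measurable (w j) := fun j => (hwFm j).mono (hFle j) le_rfl
  have hwi : ∀ j, Integrable (w j) P := by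
    intro j
    induction j with
    | zero =>
      have : w 0 = fun _ => (0:ℝ) := funext hw0
      rw [this]; exact integrable_const 0
    | succ n ih =>
      have : w (n+1) = (w n) ⊔ (s (n+1)) := by
        funext ω; simp [hw n ω, Pi.sup_def]
      rw [this]; exact ih.sup (hsi (n+1))
  have hwmono : ∀ j ω, w j ω ≤ w (j+1) ω := by
    intro j ω; rw [hw j ω]; exact le_max_left _ _
  have hwnn : ∀ j ω, 0 ≤ w j ω := by
    intro j
    induction j with
    | zero => intro ω; rw [hw0]
    | succ n ih => intro ω; exact (ih ω).trans (hwmono n ω)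
  
  -- φ properties
  have hφfun : ∀ k, φ k = fun x => ∫ ω, max x (s k ω) ∂P := fun k => funext (hφ k)
  have hφlip : ∀ k, LipschitzWith 1 (φ k) := by
    intro k; rw [hφfun k]; exact lips_int_max (hsi k)
  have hφge : ∀ k x, x ≤ φ k x := by
    intro k x
    calc x = ∫ _ω, x ∂P := by simp
      _ ≤ ∫ ω, max x (s k ω) ∂P := integral_mono (integrable_const x)
          (int_max_const (hsi k) x) (fun ω => le_max_left _ _)
      _ = φ k x := (hφ k x).symm
  have hφlip' : ∀ k x x', x ≤ x' → φ k x' ≤ φ k x + (x' - x) := by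
    intro k x x' hxx
    have := (hφlip k).dist_le_mul x' x
    rw [Real.dist_eq, Real.dist_eq, NNReal.coe_one, one_mul] at this
    have h2 := (abs_le.mp this).2
    rw [abs_of_nonneg (sub_nonneg.mpr hxx)] at h2
    linarith
  have hφanti : ∀ k l x, k ≤ l → 0 ≤ x → φ l x ≤ φ k x := by
    intro k l x hkl hx
    rw [hφ k x, hφ l x]
    have h1 : ∫ ω, max x (s l ω) ∂P = ∫ ω, max x (c l * X k ω) ∂P := by
      have hid : IdentDistrib (X l) (X k) P P := hXident l k
      have hg : Measurable fun t : ℝ => max x (c l * t) :=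
        (continuous_const.max (continuous_const.mul continuous_id)).measurable
      have hid2 : IdentDistrib (fun ω => max x (c l * X l ω))
          (fun ω => max x (c l * X k ω)) P P := hid.comp hg
      calc ∫ ω, max x (s l ω) ∂P = ∫ ω, max x (c l * X l ω) ∂P := by
            apply integral_congr_ae; filter_upwards with ω; rw [hs]
        _ = ∫ ω, max x (c l * X k ω) ∂P := hid2.integral_eq
    rw [h1]
    apply integral_mono (int_max_const ((hXint k).const_mul (c l)) x)
      (by
        have : (fun ω => max x (s k ω)) = fun ω => max x (c k * X k ω) := by
          funext ω; rw [hs]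
        rw [this]; exact int_max_const ((hXint k).const_mul (c k)) x)
    intro ω
    dsimp only
    rw [hs k ω]
    exact max_le_max le_rfl (mul_le_mul_of_nonneg_right (hc_mono k l hkl) (hXnonneg k ω))
  -- Jmax facts
  have hβpos : (0:ℝ) ≤ 1/β := by positivity
  have hJK : Jmax ≤ K := by rw [hJmax]; exact min_le_left _ _
  have hJ1 : 1 ≤ Jmax := by
    rw [hJmax]
    refine le_min hK (Nat.le_floor ?_)
    rw [Nat.cast_one, le_div_iff₀ hβ0, one_mul]
    exact hβ1.le
  have hβj : ∀ j : ℕ, j ≤ Jmax → (j:ℝ) * β ≤ 1 := by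
    intro j hj
    have h1 : j ≤ ⌊1/β⌋₊ := le_trans hj (by rw [hJmax]; exact min_le_right _ _)
    have h2 : (j:ℝ) ≤ 1/β := (Nat.le_floor_iff hβpos).mp h1
    calc (j:ℝ) * β ≤ (1/β) * β := mul_le_mul_of_nonneg_right h2 hβ0.le
      _ = 1 := by field_simp
  
  -- the one-stage look-ahead stopping region
  set A : ℕ → Set Ω := fun j =>
    {ω | (1 - ((j:ℝ) + 1) * β) * φ (j + 1) (w j ω) ≤ (1 - (j:ℝ) * β) * w j ω} with hA
  have hAF : ∀ j, MeasurableSet[F j] (A j) := by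
    intro j
    have h1 : Measurable[F j] fun ω => (1 - ((j:ℝ) + 1) * β) * φ (j + 1) (w j ω) :=
      (((hφlip (j+1)).continuous.measurable.comp (hwFm j)).const_mul _)
    have h2 : Measurable[F j] fun ω => (1 - (j:ℝ) * β) * w j ω := (hwFm j).const_mul _
    exact measurableSet_le h1 h2
  -- monotone step
  have hmonA : ∀ j : ℕ, 1 ≤ j → j + 2 ≤ Jmax → A j ⊆ A (j + 1) := by
    intro j hj1 hj2 ω hmem
    simp only [hA, Set.mem_setOf_eq] at hmem ⊢
    set x := w j ω with hx
    set x' := w (j + 1) ω with hx'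
    have hx0 : 0 ≤ x := hwnn j ω
    have hxx' : x ≤ x' := hwmono j ω
    have hd0 : x ≤ φ (j + 1) x := hφge (j + 1) x
    have hanti : φ (j + 1 + 1) x' ≤ φ (j + 1) x' :=
      hφanti (j + 1) (j + 2) x' (by omega) (hx0.trans hxx')
    have hlips : φ (j + 1) x' ≤ φ (j + 1) x + (x' - x) := hφlip' (j + 1) x x' hxx'
    have hc2 : ((j:ℝ) + 2) * β ≤ 1 := by
      have := hβj (j + 2) hj2; push_cast at this; linarith
    have hc2' : (0:ℝ) ≤ 1 - ((j:ℝ) + 2) * β := by linarith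
    have hcast : ((j + 1 : ℕ) : ℝ) = (j:ℝ) + 1 := by push_cast; ring
    rw [hcast]
    -- from the hypothesis: β x ≥ (1 - (j+1)β)(φ(x) - x)
    have h2 : (1 - ((j:ℝ) + 1) * β) * (φ (j + 1) x - x) ≤ β * x := by nlinarith [hmem]
    have h3 : (1 - ((j:ℝ) + 2) * β) * (φ (j + 1) x - x) ≤
        (1 - ((j:ℝ) + 1) * β) * (φ (j + 1) x - x) := by
      apply mul_le_mul_of_nonneg_right _ (by linarith)
      linarith [hβ0.le]
    have h1 : (1 - (((j:ℝ) + 1) + 1) * β) * φ (j + 1 + 1) x' ≤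
        (1 - (((j:ℝ) + 1) + 1) * β) * (φ (j + 1) x + (x' - x)) := by
      apply mul_le_mul_of_nonneg_left (hanti.trans hlips)
      have : ((j:ℝ) + 1) + 1 = (j:ℝ) + 2 := by ring
      rw [this]; exact hc2'
    have hb : β * x ≤ β * x' := mul_le_mul_of_nonneg_left hxx' hβ0.le
    nlinarith [h1, h2, h3, hb]
  have hchain : ∀ i j : ℕ, 1 ≤ i → i ≤ j → j + 1 ≤ Jmax → A i ⊆ A j := by
    intro i j hi1 hij hjJ
    induction j with
    | zero => omega
    | succ n ih =>
      rcases Nat.lt_or_ge i (n + 1) with h | h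
      · have hin : i ≤ n := by omega
        have h1 : A i ⊆ A n := ih hin (by omega)
        exact h1.trans (hmonA n (by omega) (by omega))
      · have : i = n + 1 := by omega
        rw [this]
  -- Jstar characterization
  have hSJ : ∀ ω, Jmax ∈ ({j : ℕ | 1 ≤ j ∧ j ≤ Jmax - 1 ∧
      (1 - (j : ℝ) * β) * w j ω ≥ (1 - ((j : ℝ) + 1) * β) * φ (j + 1) (w j ω)}
      ∪ {Jmax}) := fun ω => Or.inr rfl
  have hJstar_le : ∀ ω, Jstar ω ≤ Jmax := by
    intro ω; rw [hJstar ω]; exact Nat.sInf_le (hSJ ω)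
  have hJstar_ge : ∀ ω, 1 ≤ Jstar ω := by
    intro ω
    rw [hJstar ω]
    have hne := Nat.sInf_mem (Set.nonempty_of_mem (hSJ ω))
    rcases hne with h | h
    · exact h.1
    · simp only [Set.mem_singleton_iff] at h; omega
  have hJstar_le_iff : ∀ ω (j : ℕ), 1 ≤ j → j + 1 ≤ Jmax → (Jstar ω ≤ j ↔ ω ∈ A j) := by
    intro ω j hj1 hjJ
    constructor
    · intro hle
      have hne := Nat.sInf_mem (Set.nonempty_of_mem (hSJ ω))
      rw [← hJstar ω] at hne
      rcases hne with h | h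
      · obtain ⟨hi1, _hi2, hi3⟩ := h
        have : ω ∈ A (Jstar ω) := hi3
        exact hchain (Jstar ω) j hi1 hle hjJ this
      · simp only [Set.mem_singleton_iff] at h; omega
    · intro hmem
      rw [hJstar ω]
      apply Nat.sInf_le
      exact Or.inl ⟨hj1, by omega, hmem⟩
  have hJstar_gt_iff : ∀ ω (j : ℕ), 1 ≤ j → j + 1 ≤ Jmax → (j < Jstar ω ↔ ω ∉ A j) := by
    intro ω j hj1 hjJ
    rw [← not_le, not_iff_not]
    exact hJstar_le_iff ω j hj1 hjJ
  
  -- reward process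
  set y : ℕ → Ω → ℝ := fun j ω => (1 - (j:ℝ) * β) * w j ω with hy
  have hym : ∀ j, Measurable (y j) := fun j => (hwm j).const_mul _
  have hyi : ∀ j, Integrable (y j) P := fun j => (hwi j).const_mul _
  -- products with bounded measurable functions are integrable
  have hmul_int : ∀ f χ : Ω → ℝ, Integrable f P → Measurable f → Measurable χ →
      (∀ ω, |χ ω| ≤ 1) → Integrable (fun ω => f ω * χ ω) P := by
    intro f χ hfi hfm hχm hb
    apply Integrable.mono' hfi.abs (hfm.mul hχm).aestronglyMeasurable
    filter_upwards with ω
    rw [Real.norm_eq_abs, Pi.mul_apply, abs_mul]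
    calc |f ω| * |χ ω| ≤ |f ω| * 1 := mul_le_mul_of_nonneg_left (hb ω) (abs_nonneg _)
      _ = |f ω| := mul_one _
  have hind_abs : ∀ (B : Set Ω) (ω : Ω), |Set.indicator B (fun _ => (1:ℝ)) ω| ≤ 1 := by
    intro B ω; by_cases h : ω ∈ B <;> simp [Set.indicator_apply, h]
  -- stopping-time events
  have hτgtF : ∀ j : ℕ, MeasurableSet[F j] {ω | j < τ ω} := by
    intro j
    have he : {ω | j < τ ω} = (⋃ i ∈ Finset.range (j+1), {ω | τ ω = i})ᶜ := by
      ext ω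
      simp only [Set.mem_setOf_eq, Set.mem_compl_iff, Set.mem_iUnion, Finset.mem_range,
        not_exists]
      constructor
      · intro h i hi hτ; omega
      · intro h
        by_contra hc
        exact h (τ ω) (by omega) rfl
    rw [he]
    refine MeasurableSet.compl ?_
    refine Finset.measurableSet_biUnion _ fun i hi => ?_
    have hij : i ≤ j := by
      have := Finset.mem_range.mp hi; omega
    exact hFmono i j hij _ (hτ_stopping i)
  have hJgtF : ∀ j : ℕ, 1 ≤ j → j + 1 ≤ Jmax → MeasurableSet[F j] {ω | j < Jstar ω} := by
    intro j hj1 hjJ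
    have he : {ω | j < Jstar ω} = (A j)ᶜ := by
      ext ω
      simp only [Set.mem_setOf_eq, Set.mem_compl_iff]
      exact hJstar_gt_iff ω j hj1 hjJ
    rw [he]
    exact (hAF j).compl
  -- the key conditional-expectation computation via independence
  have hkey : ∀ j : ℕ, 1 ≤ j → j + 1 ≤ Jmax → ∀ χ : Ω → ℝ, Measurable[F j] χ →
      (∀ ω, |χ ω| ≤ 1) →
      ∫ ω, (y (j+1) ω - y j ω) * χ ω ∂P
        = ∫ ω, ((1 - ((j:ℝ)+1) * β) * φ (j+1) (w j ω) - (1 - (j:ℝ) * β) * w j ω) * χ ω ∂P := by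
    intro j hj1 hjJ χ hχF hχb
    have hχm : Measurable χ := hχF.mono (hFle j) le_rfl
    have hφw_m : Measurable fun ω => φ (j+1) (w j ω) :=
      (hφlip (j+1)).continuous.measurable.comp (hwm j)
    have hmax_m : Measurable fun ω => max (w j ω) (s (j+1) ω) := (hwm j).max (hsm (j+1))
    have hmax_i : Integrable (fun ω => max (w j ω) (s (j+1) ω)) P := by
      have he : (fun ω => max (w j ω) (s (j+1) ω)) = w j ⊔ s (j+1) := by
        funext ω; simp [Pi.sup_def]
      rw [he]; exact (hwi j).sup (hsi (j+1))
    have hindep0 : Indep (F j) (MeasurableSpace.comap (s (j+1)) inferInstance) P :=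
      indep_F_s K X hXmeas hXindep c s hs F hF j (by omega)
    have hpairF : Measurable[F j] fun ω => (w j ω, χ ω) := Measurable.prodMk (hwFm j) hχF
    have hindep : IndepFun (fun ω => (w j ω, χ ω)) (s (j+1)) P := by
      rw [IndepFun_iff_Indep]
      exact indep_of_indep_of_le_left hindep0 hpairF.comap_le
    have hmax := indep_max_integral (hwm j) hχm (hsm (j+1)) hχb hindep (hwi j) (hsi (j+1))
    have e0 : ∀ ω, (y (j+1) ω - y j ω) * χ ω =
        (1 - ((j:ℝ)+1) * β) * (max (w j ω) (s (j+1) ω) * χ ω)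
          - (1 - (j:ℝ) * β) * (w j ω * χ ω) := by
      intro ω
      simp only [hy]
      rw [hw j ω]
      push_cast
      ring
    have e1 : ∫ ω, (y (j+1) ω - y j ω) * χ ω ∂P
        = (1 - ((j:ℝ)+1) * β) * ∫ ω, max (w j ω) (s (j+1) ω) * χ ω ∂P
          - (1 - (j:ℝ) * β) * ∫ ω, w j ω * χ ω ∂P := by
      rw [← integral_const_mul, ← integral_const_mul,
        ← integral_sub ((hmul_int _ _ hmax_i hmax_m hχm hχb).const_mul _)
          ((hmul_int _ _ (hwi j) (hwm j) hχm hχb).const_mul _)]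
      exact integral_congr_ae (Filter.Eventually.of_forall fun ω => e0 ω)
    have e2 : ∫ ω, max (w j ω) (s (j+1) ω) * χ ω ∂P = ∫ ω, φ (j+1) (w j ω) * χ ω ∂P := by
      rw [hmax]
      refine integral_congr_ae (Filter.Eventually.of_forall fun ω => ?_)
      show (∫ ω', max (w j ω) (s (j+1) ω') ∂P) * χ ω = φ (j+1) (w j ω) * χ ω
      rw [hφ (j+1) (w j ω)]
    have hφw_i : Integrable (fun ω => φ (j+1) (w j ω)) P := by
      apply Integrable.mono' ((hwi j).abs.add (integrable_const |φ (j+1) 0|))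
        hφw_m.aestronglyMeasurable
      filter_upwards with ω
      rw [Real.norm_eq_abs]
      have h1 : |φ (j+1) (w j ω) - φ (j+1) 0| ≤ |w j ω - 0| := by
        have := (hφlip (j+1)).dist_le_mul (w j ω) 0
        rwa [Real.dist_eq, Real.dist_eq, NNReal.coe_one, one_mul] at this
      rw [sub_zero] at h1
      calc |φ (j+1) (w j ω)| = |(φ (j+1) (w j ω) - φ (j+1) 0) + φ (j+1) 0| := by ring_nf
        _ ≤ |φ (j+1) (w j ω) - φ (j+1) 0| + |φ (j+1) 0| := abs_add_le _ _
        _ ≤ |w j ω| + |φ (j+1) 0| := by linarith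
    have e3 : ∫ ω, ((1 - ((j:ℝ)+1) * β) * φ (j+1) (w j ω) - (1 - (j:ℝ) * β) * w j ω) * χ ω ∂P
        = (1 - ((j:ℝ)+1) * β) * ∫ ω, φ (j+1) (w j ω) * χ ω ∂P
          - (1 - (j:ℝ) * β) * ∫ ω, w j ω * χ ω ∂P := by
      rw [← integral_const_mul, ← integral_const_mul,
        ← integral_sub ((hmul_int _ _ hφw_i hφw_m hχm hχb).const_mul _)
          ((hmul_int _ _ (hwi j) (hwm j) hχm hχb).const_mul _)]
      exact integral_congr_ae (Filter.Eventually.of_forall fun ω => by ring)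
    rw [e1, e2, e3]
  
  -- increment terms
  set u : (Ω → ℕ) → ℕ → Ω → ℝ := fun σ j ω =>
    (y (j+1) ω - y j ω) * Set.indicator {ω' | j < σ ω'} (fun _ => (1:ℝ)) ω with hu
  have hu_int : ∀ (σ : Ω → ℕ) (j : ℕ), MeasurableSet {ω | j < σ ω} →
      Integrable (u σ j) P := by
    intro σ j hB
    exact hmul_int _ _ ((hyi (j+1)).sub (hyi j)) ((hym (j+1)).sub (hym j))
      (measurable_const.indicator hB) (hind_abs _)
  -- telescoping identity
  have htel : ∀ (σ : Ω → ℕ) (ω : Ω), 1 ≤ σ ω → σ ω ≤ Jmax →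
      y (σ ω) ω = y 1 ω + ∑ j ∈ Finset.Ico 1 Jmax, u σ j ω := by
    intro σ ω h1 h2
    have hueq : ∀ j, u σ j ω = if j < σ ω then y (j+1) ω - y j ω else 0 := by
      intro j
      simp only [hu, Set.indicator_apply, Set.mem_setOf_eq]
      split <;> simp
    rw [Finset.sum_congr rfl (fun j _ => hueq j)]
    rw [← Finset.sum_Ico_consecutive _ h1 h2]
    have hs1 : ∑ j ∈ Finset.Ico 1 (σ ω), (if j < σ ω then y (j+1) ω - y j ω else 0)
        = ∑ j ∈ Finset.Ico 1 (σ ω), (y (j+1) ω - y j ω) :=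
      Finset.sum_congr rfl fun j hj => if_pos (Finset.mem_Ico.mp hj).2
    have hs2 : ∑ j ∈ Finset.Ico (σ ω) Jmax, (if j < σ ω then y (j+1) ω - y j ω else 0)
        = 0 :=
      Finset.sum_eq_zero fun j hj => if_neg (by
        have := (Finset.mem_Ico.mp hj).1; omega)
    rw [hs1, hs2]
    have hs3 : ∑ j ∈ Finset.Ico 1 (σ ω), (y (j+1) ω - y j ω) = y (σ ω) ω - y 1 ω := by
      rw [Finset.sum_Ico_eq_sub _ h1, Finset.sum_range_sub (fun j => y j ω),
        Finset.sum_range_sub (fun j => y j ω)]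
      ring
    rw [hs3]
    ring
  -- per-step comparison
  have hmain : ∀ j ∈ Finset.Ico 1 Jmax, ∫ ω, u τ j ω ∂P ≤ ∫ ω, u Jstar j ω ∂P := by
    intro j hj
    obtain ⟨hj1, hjlt⟩ := Finset.mem_Ico.mp hj
    have hjJ : j + 1 ≤ Jmax := hjlt
    set B1 : Set Ω := {ω | j < τ ω} ∩ A j with hB1
    set B2 : Set Ω := (A j)ᶜ ∩ {ω | j < τ ω}ᶜ with hB2
    have hB1F : MeasurableSet[F j] B1 := (hτgtF j).inter (hAF j)
    have hB2F : MeasurableSet[F j] B2 := (hAF j).compl.inter (hτgtF j).compl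
    have hB1m : MeasurableSet B1 := hFle j _ hB1F
    have hB2m : MeasurableSet B2 := hFle j _ hB2F
    -- pointwise decomposition
    have hpoint : ∀ ω, u τ j ω - u Jstar j ω =
        (y (j+1) ω - y j ω) * Set.indicator B1 (fun _ => (1:ℝ)) ω
          - (y (j+1) ω - y j ω) * Set.indicator B2 (fun _ => (1:ℝ)) ω := by
      intro ω
      have hJiff := hJstar_gt_iff ω j hj1 hjJ
      by_cases h1 : j < τ ω <;> by_cases h2 : ω ∈ A j
      · have h3 : ¬ j < Jstar ω := by rw [hJiff]; exact fun h => h h2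
        simp [hu, hB1, hB2, Set.indicator_apply, Set.mem_setOf_eq, Set.mem_inter_iff,
          Set.mem_compl_iff, h1, h2, h3]
      · have h3 : j < Jstar ω := hJiff.mpr h2
        simp [hu, hB1, hB2, Set.indicator_apply, Set.mem_setOf_eq, Set.mem_inter_iff,
          Set.mem_compl_iff, h1, h2, h3]
      · have h3 : ¬ j < Jstar ω := by rw [hJiff]; exact fun h => h h2
        simp [hu, hB1, hB2, Set.indicator_apply, Set.mem_setOf_eq, Set.mem_inter_iff,
          Set.mem_compl_iff, h1, h2, h3]
      · have h3 : j < Jstar ω := hJiff.mpr h2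
        simp [hu, hB1, hB2, Set.indicator_apply, Set.mem_setOf_eq, Set.mem_inter_iff,
          Set.mem_compl_iff, h1, h2, h3]
    have hint1 : Integrable (fun ω =>
        (y (j+1) ω - y j ω) * Set.indicator B1 (fun _ => (1:ℝ)) ω) P :=
      hmul_int _ _ ((hyi (j+1)).sub (hyi j)) ((hym (j+1)).sub (hym j))
        (measurable_const.indicator hB1m) (hind_abs _)
    have hint2 : Integrable (fun ω =>
        (y (j+1) ω - y j ω) * Set.indicator B2 (fun _ => (1:ℝ)) ω) P :=
      hmul_int _ _ ((hyi (j+1)).sub (hyi j)) ((hym (j+1)).sub (hym j))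
        (measurable_const.indicator hB2m) (hind_abs _)
    have huτ : Integrable (u τ j) P := hu_int τ j (hFle j _ (hτgtF j))
    have huJ : Integrable (u Jstar j) P := hu_int Jstar j (hFle j _ (hJgtF j hj1 hjJ))
    have hsplit : ∫ ω, u τ j ω ∂P - ∫ ω, u Jstar j ω ∂P
        = ∫ ω, (y (j+1) ω - y j ω) * Set.indicator B1 (fun _ => (1:ℝ)) ω ∂P
          - ∫ ω, (y (j+1) ω - y j ω) * Set.indicator B2 (fun _ => (1:ℝ)) ω ∂P := by
      rw [← integral_sub huτ huJ, ← integral_sub hint1 hint2]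
      exact integral_congr_ae (Filter.Eventually.of_forall fun ω => hpoint ω)
    have hχ1F : Measurable[F j] (Set.indicator B1 (fun _ => (1:ℝ))) := by
      exact Measurable.indicator measurable_const hB1F
    have hχ2F : Measurable[F j] (Set.indicator B2 (fun _ => (1:ℝ))) := by
      exact Measurable.indicator measurable_const hB2F
    have hle1 : ∫ ω, (y (j+1) ω - y j ω) * Set.indicator B1 (fun _ => (1:ℝ)) ω ∂P ≤ 0 := by
      rw [hkey j hj1 hjJ _ hχ1F (hind_abs _)]
      refine integral_nonpos fun ω => ?_
      simp only [Pi.zero_apply]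
      by_cases hm : ω ∈ B1
      · have hAj : ω ∈ A j := hm.2
        simp only [hA, Set.mem_setOf_eq] at hAj
        simp only [Set.indicator_of_mem hm, mul_one]
        linarith
      · simp [Set.indicator_of_notMem hm]
    have hle2 : 0 ≤ ∫ ω, (y (j+1) ω - y j ω) * Set.indicator B2 (fun _ => (1:ℝ)) ω ∂P := by
      rw [hkey j hj1 hjJ _ hχ2F (hind_abs _)]
      refine integral_nonneg fun ω => ?_
      simp only [Pi.zero_apply]
      by_cases hm : ω ∈ B2
      · have hAj : ω ∉ A j := hm.1
        simp only [hA, Set.mem_setOf_eq, not_le] at hAj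
        simp only [Set.indicator_of_mem hm, mul_one]
        linarith
      · simp [Set.indicator_of_notMem hm]
    linarith
  -- final assembly
  have hτgt_m : ∀ j, MeasurableSet {ω | j < τ ω} := fun j => hFle j _ (hτgtF j)
  have hτint : ∀ j ∈ Finset.Ico 1 Jmax, Integrable (u τ j) P :=
    fun j _ => hu_int τ j (hτgt_m j)
  have hJint : ∀ j ∈ Finset.Ico 1 Jmax, Integrable (u Jstar j) P := by
    intro j hj
    obtain ⟨hj1, hjlt⟩ := Finset.mem_Ico.mp hj
    exact hu_int Jstar j (hFle j _ (hJgtF j hj1 hjlt))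
  show ∫ ω, y (τ ω) ω ∂P ≤ ∫ ω, y (Jstar ω) ω ∂P
  calc ∫ ω, y (τ ω) ω ∂P
      = ∫ ω, (y 1 ω + ∑ j ∈ Finset.Ico 1 Jmax, u τ j ω) ∂P := by
        refine integral_congr_ae ?_
        filter_upwards [hτ_range] with ω hω
        exact htel τ ω hω.1 hω.2
    _ = ∫ ω, y 1 ω ∂P + ∑ j ∈ Finset.Ico 1 Jmax, ∫ ω, u τ j ω ∂P := by
        rw [integral_add (hyi 1) (integrable_finset_sum _ hτint),
          integral_finset_sum _ hτint]
    _ ≤ ∫ ω, y 1 ω ∂P + ∑ j ∈ Finset.Ico 1 Jmax, ∫ ω, u Jstar j ω ∂P := by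
        exact add_le_add le_rfl (Finset.sum_le_sum hmain)
    _ = ∫ ω, (y 1 ω + ∑ j ∈ Finset.Ico 1 Jmax, u Jstar j ω) ∂P := by
        rw [integral_add (hyi 1) (integrable_finset_sum _ hJint),
          integral_finset_sum _ hJint]
    _ = ∫ ω, y (Jstar ω) ω ∂P := by
        refine integral_congr_ae (Filter.Eventually.of_forall fun ω => ?_)
        exact (htel Jstar ω (hJstar_ge ω) (hJstar_le ω)).symm
end

section
/- Assume (j+2)β < 1, let v_j ≥ 0 and v_{j+1} ≥ 0 satisfy v_j = g_j(v_j) and v_{j+1} = g_{j+1}(v_{j+1}), and assume P(X > v_{j+1}) > 0. Then v_{j+1} < v_j: the static stopping thresholds are strictly decreasing in the number of probed users. -/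
open MeasureTheory

/-- If `(j+2)β < 1`, `v_j = g_j(v_j)`, `v_{j+1} = g_{j+1}(v_{j+1})` and
`P(X > v_{j+1}) > 0`, then `v_{j+1} < v_j`: the static stopping thresholds are strictly
decreasing in the number of probed users. -/
theorem static_thresholds_strictly_decreasing
    {Ω : Type*} [MeasurableSpace Ω] (P : Measure Ω) [IsProbabilityMeasure P]
    (X : Ω → ℝ) (hXmeas : Measurable X) (hXnonneg : ∀ ω, 0 ≤ X ω)
    (hXint : Integrable X P) (hXmean : ∫ ω, X ω ∂P = 1)
    (β : ℝ) (hβ0 : 0 < β) (hβ1 : β < 1)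
    (j : ℕ) (hjβ : ((j : ℝ) + 2) * β < 1)
    (g : ℕ → ℝ → ℝ)
    (hg : ∀ (m : ℕ) (v : ℝ),
      g m v = (1 / β - ((m : ℝ) + 1)) * ∫ ω, max (X ω - v) 0 ∂P)
    (vj vj1 : ℝ) (hvj : 0 ≤ vj) (hvj1 : 0 ≤ vj1)
    (hfix_j : vj = g j vj) (hfix_j1 : vj1 = g (j + 1) vj1)
    (hXpos : 0 < P {ω | vj1 < X ω}) :
    vj1 < vj := by
  have hint : ∀ v : ℝ, Integrable (fun ω => max (X ω - v) 0) P := fun v =>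
    (hXint.sub (integrable_const v)).pos_part
  -- positivity of E[(X - vj1)^+]
  have hF1pos : 0 < ∫ ω, max (X ω - vj1) 0 ∂P := by
    refine (MeasureTheory.integral_pos_iff_support_of_nonneg_ae
      (Filter.Eventually.of_forall fun ω => le_max_right _ _) (hint vj1)).mpr ?_
    refine lt_of_lt_of_le hXpos (measure_mono ?_)
    intro ω hω
    simp only [Set.mem_setOf_eq] at hω
    simp only [Function.mem_support]
    have : 0 < X ω - vj1 := by linarith
    positivity
  have hc1pos : 0 < 1 / β - ((j : ℝ) + 2) := by
    rw [sub_pos, lt_div_iff₀ hβ0]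
    linarith
  by_contra h
  push_neg at h
  -- h : vj ≤ vj1
  have hmono : ∫ ω, max (X ω - vj1) 0 ∂P ≤ ∫ ω, max (X ω - vj) 0 ∂P := by
    refine integral_mono (hint vj1) (hint vj) fun ω => ?_
    exact max_le_max (by linarith) le_rfl
  have h1 : vj1 = (1 / β - ((j : ℝ) + 2)) * ∫ ω, max (X ω - vj1) 0 ∂P := by
    nth_rewrite 1 [hfix_j1]; rw [hg]; push_cast; ring
  have h2 : vj = (1 / β - ((j : ℝ) + 1)) * ∫ ω, max (X ω - vj) 0 ∂P := by
    nth_rewrite 1 [hfix_j]; rw [hg]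
  have hlt : vj1 < vj := by
    rw [h1, h2]
    calc (1 / β - ((j : ℝ) + 2)) * ∫ ω, max (X ω - vj1) 0 ∂P
        < (1 / β - ((j : ℝ) + 1)) * ∫ ω, max (X ω - vj1) 0 ∂P := by
          apply mul_lt_mul_of_pos_right (by linarith) hF1pos
      _ ≤ (1 / β - ((j : ℝ) + 1)) * ∫ ω, max (X ω - vj) 0 ∂P := by
          apply mul_le_mul_of_nonneg_left hmono (by linarith)
  linarith
end

section
/- If T_k(n−1) > 0 for every k and exactly one user i is scheduled (I_i(n) = 1 and I_k(n) = 0 for k ≠ i), then the increase of the proportional-fair utility satisfies u(T(n)) − u(T(n−1)) = Σ_{k=1}^K ln( (n−1)/n + ((1 − βJ(n))/n)·s_k(n)·I_k(n) ), where s_k(n) = R_k(n)/T_k(n−1). Moreover, for a fixed number of probes J(n) with 1 − βJ(n) > 0, this increment is maximized over the choice of the scheduled user i by scheduling any user with the maximum throughput-normalized rate s_i(n) = max_k s_k(n). -/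
lemma pf_aux_sum {K : ℕ} (c a : ℝ) (s : Fin K → ℝ) (j : Fin K) :
    (∑ k, Real.log (c + a * s k * (if k = j then (1 : ℝ) else 0))) =
      (Real.log (c + a * s j) - Real.log c) + ∑ _k : Fin K, Real.log c := by
  have : ∀ k : Fin K, Real.log (c + a * s k * (if k = j then (1 : ℝ) else 0)) =
      (if k = j then Real.log (c + a * s k) - Real.log c else 0) + Real.log c := by
    intro k
    by_cases h : k = j <;> simp [h]
  rw [Finset.sum_congr rfl (fun k _ => this k), Finset.sum_add_distrib,
    Finset.sum_ite_eq' Finset.univ j (fun k => Real.log (c + a * s k) - Real.log c)]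
  simp

/-- If `T_k(n−1) > 0` for every `k` and exactly one user `i` is scheduled, then the
increase of the proportional-fair utility is
`u(T(n)) − u(T(n−1)) = Σ_k ln((n−1)/n + ((1 − βJ(n))/n)·s_k(n)·I_k(n))` with
`s_k(n) = R_k(n)/T_k(n−1)`; moreover, for a fixed number of probes `J(n)` with
`1 − βJ(n) > 0`, this increment is maximized over the choice of the scheduled user
by scheduling any user with the maximum throughput-normalized rate. -/
theorem pf_utility_increment
    (K n : ℕ) (hK : 1 ≤ K) (hn : 2 ≤ n)
    (β : ℝ) (hβ0 : 0 < β) (hβ1 : β < 1)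
    (Jn : ℕ) (hJn1 : 1 ≤ Jn) (hJnK : Jn ≤ K)
    (R : Fin K → ℝ) (hR : ∀ k, 0 ≤ R k)
    (T' T : Fin K → ℝ) (hT' : ∀ k, 0 < T' k) (hT : ∀ k, 0 < T k)
    (I : Fin K → ℝ) (i : Fin K)
    (hIi : I i = 1) (hIne : ∀ k, k ≠ i → I k = 0)
    (B : Fin K → ℝ) (hB : ∀ k, B k = (1 - β * (Jn : ℝ)) * R k * I k)
    (hrec : ∀ k, T k = (((n : ℝ) - 1) / n) * T' k + (1 / n) * B k)
    (s : Fin K → ℝ) (hs : ∀ k, s k = R k / T' k) :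
    ((∑ k, Real.log (T k)) - (∑ k, Real.log (T' k)) =
      ∑ k, Real.log (((n : ℝ) - 1) / n + ((1 - β * (Jn : ℝ)) / n) * s k * I k)) ∧
    (1 - β * (Jn : ℝ) > 0 →
      ∀ imax : Fin K, (∀ k, s k ≤ s imax) →
        ∀ i' : Fin K,
          (∑ k, Real.log (((n : ℝ) - 1) / n +
              ((1 - β * (Jn : ℝ)) / n) * s k * (if k = i' then (1 : ℝ) else 0))) ≤
          ∑ k, Real.log (((n : ℝ) - 1) / n +
              ((1 - β * (Jn : ℝ)) / n) * s k * (if k = imax then (1 : ℝ) else 0))) := by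
  have hn0 : (0 : ℝ) < (n : ℝ) := by positivity
  have hc : (0 : ℝ) < ((n : ℝ) - 1) / n := by
    apply div_pos _ hn0
    have : (2 : ℝ) ≤ (n : ℝ) := by exact_mod_cast hn
    linarith
  constructor
  · have key : ∀ k, T k = T' k *
        (((n : ℝ) - 1) / n + ((1 - β * (Jn : ℝ)) / n) * s k * I k) := by
      intro k
      have h1 : T' k ≠ 0 := ne_of_gt (hT' k)
      have h2 : (n : ℝ) ≠ 0 := ne_of_gt hn0
      rw [hrec k, hB k, hs k]
      field_simp
    rw [← Finset.sum_sub_distrib]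
    apply Finset.sum_congr rfl
    intro k _
    have hTk := hT k
    have hT'k := hT' k
    have hcpos : 0 < ((n : ℝ) - 1) / n + ((1 - β * (Jn : ℝ)) / n) * s k * I k := by
      have := key k
      nlinarith [hTk, hT'k]
    rw [key k, Real.log_mul (ne_of_gt hT'k) (ne_of_gt hcpos)]
    ring
  · intro ha imax himax i'
    set c := ((n : ℝ) - 1) / n
    set a := (1 - β * (Jn : ℝ)) / n
    have ha0 : 0 < a := div_pos ha hn0
    rw [pf_aux_sum c a s i', pf_aux_sum c a s imax]
    have hs0 : ∀ k, 0 ≤ s k := fun k => by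
      rw [hs k]; exact div_nonneg (hR k) (le_of_lt (hT' k))
    have h1 : 0 < c + a * s i' := by nlinarith [hs0 i']
    have h2 : c + a * s i' ≤ c + a * s imax := by nlinarith [himax i']
    have := Real.log_le_log h1 h2
    linarith
end
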